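/- Let Q^p, Q^s be independent Poisson with means C^{γ^p} and C^{γ^s} where 0 < γ^s < γ^p < 1. Then lim_{C→∞} -(log P(Q^p+Q^s > C, Q^s>0))/(C log C) = 1 - γ^p; in particular the secondary diversity gain is independent of γ^s. -/

import Mathlib

open Filter Real

noncomputable def poisP (l : ℝ) (k : ℕ) : ℝ := Real.exp (-l) * l ^ k / (Nat.factorial k)

noncomputable def secOutage (lp ls : ℝ) (C : ℝ) : ℝ :=
  ∑' j : ℕ, ∑' k : ℕ, if C < (j : ℝ) + (k : ℝ) ∧ 0 < k then poisP lp j * poisP ls k else 0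

lemma poisP_nonneg {l : ℝ} (hl : 0 ≤ l) (k : ℕ) : 0 ≤ poisP l k := by
  unfold poisP; positivity

lemma poisP_pos {l : ℝ} (hl : 0 < l) (k : ℕ) : 0 < poisP l k := by
  unfold poisP
  have := Nat.factorial_pos k
  positivity

lemma poisP_exp_eq (l r : ℝ) (k : ℕ) :
    poisP l k * Real.exp (r * k) = Real.exp (-l) * ((l * Real.exp r) ^ k / (Nat.factorial k)) := by
  have h : Real.exp (r * k) = (Real.exp r) ^ k := by rw [← Real.exp_nat_mul, mul_comm]
  unfold poisP
  rw [h, mul_pow]; ring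

lemma summable_poisP_exp (l r : ℝ) : Summable fun k : ℕ => poisP l k * Real.exp (r * k) := by
  simp only [poisP_exp_eq]
  exact (Real.summable_pow_div_factorial _).mul_left _

lemma tsum_poisP_exp (l r : ℝ) :
    ∑' k : ℕ, poisP l k * Real.exp (r * k) = Real.exp (l * (Real.exp r - 1)) := by
  simp only [poisP_exp_eq]
  rw [tsum_mul_left]
  have h : ∑' n : ℕ, (l * Real.exp r) ^ n / (Nat.factorial n) = Real.exp (l * Real.exp r) := by
    rw [Real.exp_eq_exp_ℝ, NormedSpace.exp_eq_tsum_div]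
  rw [h, ← Real.exp_add]
  congr 1; ring

lemma summable_poisP (l : ℝ) : Summable (poisP l) := by
  have := summable_poisP_exp l 0
  simpa using this

lemma tsum_poisP (l : ℝ) : ∑' k : ℕ, poisP l k = 1 := by
  have := tsum_poisP_exp l 0
  simpa using this


lemma secOutage_le (lp ls C r : ℝ) (hlp : 0 ≤ lp) (hls : 0 ≤ ls) (hr : 0 ≤ r) :
    secOutage lp ls C ≤ Real.exp ((lp + ls) * (Real.exp r - 1) - r * C) := by
  set A : ℕ → ℝ := fun j => poisP lp j * Real.exp (r * j) * Real.exp (-(r * C)) with hA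
  set B : ℕ → ℝ := fun k => poisP ls k * Real.exp (r * k) with hB
  have hBsum : Summable B := summable_poisP_exp ls r
  have hAnn : ∀ j, 0 ≤ A j := fun j =>
    mul_nonneg (mul_nonneg (poisP_nonneg hlp j) (Real.exp_pos _).le) (Real.exp_pos _).le
  have hBnn : ∀ k, 0 ≤ B k := fun k => mul_nonneg (poisP_nonneg hls k) (Real.exp_pos _).le
  have hite_nn : ∀ j k : ℕ,
      0 ≤ (if C < (j : ℝ) + (k : ℝ) ∧ 0 < k then poisP lp j * poisP ls k else 0) := by
    intro j k; split_ifs with h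
    · exact mul_nonneg (poisP_nonneg hlp j) (poisP_nonneg hls k)
    · exact le_rfl
  have hterm : ∀ j k : ℕ,
      (if C < (j : ℝ) + (k : ℝ) ∧ 0 < k then poisP lp j * poisP ls k else 0) ≤ A j * B k := by
    intro j k
    split_ifs with h
    · have h1 : (1 : ℝ) ≤ Real.exp (r * j) * Real.exp (r * k) * Real.exp (-(r * C)) := by
        rw [← Real.exp_add, ← Real.exp_add]
        have h2 : 0 ≤ r * j + r * k + -(r * C) := by nlinarith [h.1]
        calc (1 : ℝ) = Real.exp 0 := Real.exp_zero.symm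
        _ ≤ _ := Real.exp_le_exp.mpr h2
      calc poisP lp j * poisP ls k = poisP lp j * poisP ls k * 1 := by ring
      _ ≤ poisP lp j * poisP ls k *
          (Real.exp (r * j) * Real.exp (r * k) * Real.exp (-(r * C))) :=
        mul_le_mul_of_nonneg_left h1
          (mul_nonneg (poisP_nonneg hlp j) (poisP_nonneg hls k))
      _ = A j * B k := by simp only [hA, hB]; ring
    · exact mul_nonneg (hAnn j) (hBnn k)
  have hABsum : ∀ j, Summable (fun k => A j * B k) := fun j => hBsum.mul_left _
  have hite_sum : ∀ j : ℕ, Summable (fun k : ℕ =>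
      if C < (j : ℝ) + (k : ℝ) ∧ 0 < k then poisP lp j * poisP ls k else 0) := fun j =>
    Summable.of_nonneg_of_le (hite_nn j) (hterm j) (hABsum j)
  have hg_le : ∀ j : ℕ, (∑' k : ℕ, if C < (j : ℝ) + (k : ℝ) ∧ 0 < k then poisP lp j * poisP ls k else 0)
      ≤ A j * ∑' k, B k := by
    intro j
    rw [← tsum_mul_left]
    exact Summable.tsum_le_tsum (hterm j) (hite_sum j) (hABsum j)
  have hAsum' : Summable (fun j : ℕ => A j * ∑' k, B k) := by
    have hrep : (fun j : ℕ => A j * ∑' k, B k)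
        = fun j : ℕ => poisP lp j * Real.exp (r * j) * (Real.exp (-(r * C)) * ∑' k, B k) := by
      funext j; simp only [hA]; ring
    rw [hrep]
    exact (summable_poisP_exp lp r).mul_right _
  have houter : Summable (fun j : ℕ =>
      ∑' k : ℕ, if C < (j : ℝ) + (k : ℝ) ∧ 0 < k then poisP lp j * poisP ls k else 0) :=
    Summable.of_nonneg_of_le (fun j => tsum_nonneg (hite_nn j)) hg_le hAsum'
  have step1 : secOutage lp ls C ≤ ∑' j, A j * ∑' k, B k :=
    Summable.tsum_le_tsum hg_le houter hAsum'
  have step2 : ∑' j, A j * ∑' k, B k = Real.exp ((lp + ls) * (Real.exp r - 1) - r * C) := by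
    have h1 : (fun j => A j * ∑' k, B k)
        = fun j => poisP lp j * Real.exp (r * j) * (Real.exp (-(r * C)) * ∑' k, B k) := by
      funext j; simp only [hA]; ring
    rw [h1, tsum_mul_right, tsum_poisP_exp, hB, tsum_poisP_exp, ← Real.exp_add, ← Real.exp_add]
    congr 1; ring
  linarith

lemma secOutage_ge (lp ls C : ℝ) (hlp : 0 ≤ lp) (hls : 0 ≤ ls) (m : ℕ) (hm : C < m + 1) :
    poisP lp m * poisP ls 1 ≤ secOutage lp ls C := by
  set f : ℕ → ℕ → ℝ := fun j k =>
    if C < (j : ℝ) + (k : ℝ) ∧ 0 < k then poisP lp j * poisP ls k else 0 with hf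
  have hnn : ∀ j k, 0 ≤ f j k := by
    intro j k; simp only [hf]; split_ifs
    · exact mul_nonneg (poisP_nonneg hlp j) (poisP_nonneg hls k)
    · exact le_rfl
  have hle : ∀ j k, f j k ≤ poisP lp j * poisP ls k := by
    intro j k; simp only [hf]; split_ifs
    · exact le_rfl
    · exact mul_nonneg (poisP_nonneg hlp j) (poisP_nonneg hls k)
  have hsummk : ∀ j, Summable (f j) := fun j =>
    Summable.of_nonneg_of_le (hnn j) (hle j) ((summable_poisP ls).mul_left _)
  have hg_le : ∀ j, ∑' k, f j k ≤ poisP lp j := by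
    intro j
    have := Summable.tsum_le_tsum (hle j) (hsummk j) ((summable_poisP ls).mul_left (poisP lp j))
    rwa [tsum_mul_left, tsum_poisP, mul_one] at this
  have hgsum : Summable (fun j => ∑' k, f j k) :=
    Summable.of_nonneg_of_le (fun j => tsum_nonneg (hnn j)) hg_le (summable_poisP lp)
  have h1 : f m 1 ≤ ∑' k, f m k := Summable.le_tsum (hsummk m) 1 (fun k _ => hnn m k)
  have h2 : ∑' k, f m k ≤ ∑' j, ∑' k, f j k :=
    Summable.le_tsum hgsum m (fun j _ => tsum_nonneg (hnn j))
  have h3 : f m 1 = poisP lp m * poisP ls 1 := by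
    simp only [hf]
    rw [if_pos ⟨by push_cast; linarith, one_pos⟩]
  have h4 : secOutage lp ls C = ∑' j, ∑' k, f j k := rfl
  rw [h4, ← h3]
  linarith

/-- Polynomial scaling: with `Q^p, Q^s` independent Poisson of means `C^{γ^p}` and
`C^{γ^s}` (`0 < γ^s < γ^p < 1`), the secondary diversity gain
`lim -(log P(Q^p+Q^s > C, Q^s>0))/(C log C)` equals `1 - γ^p`, independent of `γ^s`. -/
theorem secondary_diversity_polynomial (γp γs : ℝ)
    (h0 : 0 < γs) (h1 : γs < γp) (h2 : γp < 1) :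
    Tendsto (fun C : ℕ =>
        -(Real.log (secOutage ((C : ℝ) ^ γp) ((C : ℝ) ^ γs) C)) / ((C : ℝ) * Real.log C))
      atTop (nhds (1 - γp)) := by
  have hlogT : Tendsto (fun C : ℕ => Real.log C) atTop atTop :=
    Real.tendsto_log_atTop.comp tendsto_natCast_atTop_atTop
  apply tendsto_of_tendsto_of_tendsto_of_le_of_le'
    (g := fun C : ℕ => (1 - γp) - 2 / Real.log C)
    (h := fun C : ℕ => (1 - γp) + ((C : ℝ) ^ γp + (C : ℝ) ^ γs) / ((C : ℝ) * Real.log C))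
  · have h2C : Tendsto (fun C : ℕ => 2 / Real.log C) atTop (nhds 0) :=
      Tendsto.div_atTop tendsto_const_nhds hlogT
    simpa using tendsto_const_nhds.sub h2C
  · have key : ∀ γ : ℝ, γ < 1 →
        Tendsto (fun C : ℕ => (C : ℝ) ^ γ / ((C : ℝ) * Real.log C)) atTop (nhds 0) := by
      intro γ hγ
      have ha : Tendsto (fun C : ℕ => (C : ℝ) ^ (γ - 1)) atTop (nhds 0) := by
        have h3 := (tendsto_rpow_neg_atTop (y := 1 - γ) (by linarith)).comp
          (tendsto_natCast_atTop_atTop (R := ℝ))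
        simpa [Function.comp_def, neg_sub] using h3
      have hb : Tendsto (fun C : ℕ => (Real.log C)⁻¹) atTop (nhds 0) :=
        tendsto_inv_atTop_zero.comp hlogT
      have h1' : Tendsto (fun C : ℕ => (C : ℝ) ^ (γ - 1) * (Real.log C)⁻¹) atTop (nhds 0) := by
        simpa using ha.mul hb
      apply h1'.congr'
      filter_upwards [eventually_ge_atTop 1] with C hC
      have hC0 : (0 : ℝ) < C := by exact_mod_cast Nat.lt_of_lt_of_le Nat.zero_lt_one hC
      rw [Real.rpow_sub hC0, Real.rpow_one, ← div_eq_mul_inv, div_div]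
    have := (key γp h2).add (key γs (by linarith))
    have h5 : Tendsto (fun C : ℕ => ((C : ℝ) ^ γp + (C : ℝ) ^ γs) / ((C : ℝ) * Real.log C))
        atTop (nhds 0) := by
      simpa [add_div] using this
    simpa using tendsto_const_nhds.add h5
  · -- lower bound eventually
    filter_upwards [eventually_ge_atTop 3] with C hC
    set x : ℝ := (C : ℝ) with hx
    have hx3 : (3 : ℝ) ≤ x := by rw [hx]; exact_mod_cast hC
    have hx0 : 0 < x := by linarith
    have hx1 : 1 ≤ x := by linarith
    have hlog1 : 1 < Real.log x := by
      rw [Real.lt_log_iff_exp_lt hx0]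
      calc Real.exp 1 < 2.7182818286 := Real.exp_one_lt_d9
      _ ≤ x := by linarith
    have hlogpos : 0 < Real.log x := by linarith
    have hD : 0 < x * Real.log x := mul_pos hx0 hlogpos
    set lp : ℝ := x ^ γp with hlp
    set ls : ℝ := x ^ γs with hls
    have hlp0 : 0 < lp := Real.rpow_pos_of_pos hx0 _
    have hls0 : 0 < ls := Real.rpow_pos_of_pos hx0 _
    have hm : x < (C : ℕ) + 1 := by rw [hx]; exact lt_add_one _
    have hgepois := secOutage_ge lp ls x hlp0.le hls0.le C hm
    have spos : 0 < secOutage lp ls x :=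
      lt_of_lt_of_le (mul_pos (poisP_pos hlp0 C) (poisP_pos hls0 1)) hgepois
    set r : ℝ := (1 - γp) * Real.log x with hrdef
    have hr0 : 0 ≤ r := by
      apply mul_nonneg (by linarith) hlogpos.le
    have hub := secOutage_le lp ls x r hlp0.le hls0.le hr0
    have hlog_ub : Real.log (secOutage lp ls x) ≤ (lp + ls) * (Real.exp r - 1) - r * x :=
      (Real.log_le_iff_le_exp spos).mpr hub
    have her : Real.exp r = x ^ (1 - γp) := by
      rw [Real.rpow_def_of_pos hx0, mul_comm]
    have e1 : lp * Real.exp r = x := by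
      rw [her, hlp, ← Real.rpow_add hx0]
      norm_num
    have e2 : ls * Real.exp r ≤ x := by
      rw [her, hls, ← Real.rpow_add hx0]
      calc x ^ (γs + (1 - γp)) ≤ x ^ (1 : ℝ) :=
        Real.rpow_le_rpow_of_exponent_le hx1 (by linarith)
      _ = x := Real.rpow_one x
    have hS : (lp + ls) * (Real.exp r - 1) - r * x ≤ 2 * x - (1 - γp) * (x * Real.log x) := by
      have hrx : r * x = (1 - γp) * (x * Real.log x) := by rw [hrdef]; ring
      nlinarith [hlp0.le, hls0.le]
    have key : (1 - γp) * (x * Real.log x) - 2 * x ≤ -Real.log (secOutage lp ls x) := by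
      linarith
    rw [le_div_iff₀ hD]
    have expand : ((1 - γp) - 2 / Real.log x) * (x * Real.log x)
        = (1 - γp) * (x * Real.log x) - 2 * x := by
      field_simp
    linarith
  · filter_upwards [eventually_ge_atTop 3] with C hC
    set x : ℝ := (C : ℝ) with hx
    have hx3 : (3 : ℝ) ≤ x := by rw [hx]; exact_mod_cast hC
    have hx0 : 0 < x := by linarith
    have hlog1 : 1 < Real.log x := by
      rw [Real.lt_log_iff_exp_lt hx0]
      calc Real.exp 1 < 2.7182818286 := Real.exp_one_lt_d9
      _ ≤ x := by linarith
    have hlogpos : 0 < Real.log x := by linarith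
    have hD : 0 < x * Real.log x := mul_pos hx0 hlogpos
    set lp : ℝ := x ^ γp with hlp
    set ls : ℝ := x ^ γs with hls
    have hlp0 : 0 < lp := Real.rpow_pos_of_pos hx0 _
    have hls0 : 0 < ls := Real.rpow_pos_of_pos hx0 _
    have hm : x < (C : ℕ) + 1 := by rw [hx]; exact lt_add_one _
    have hgepois := secOutage_ge lp ls x hlp0.le hls0.le C hm
    have spos : 0 < secOutage lp ls x :=
      lt_of_lt_of_le (mul_pos (poisP_pos hlp0 C) (poisP_pos hls0 1)) hgepois
    have elp : Real.exp (γp * Real.log x) = lp := by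
      rw [hlp, Real.rpow_def_of_pos hx0, mul_comm]
    have els : Real.exp (γs * Real.log x) = ls := by
      rw [hls, Real.rpow_def_of_pos hx0, mul_comm]
    have e3 : Real.exp (x * (γp * Real.log x)) = lp ^ C := by
      rw [hx, Real.exp_nat_mul, elp]
    have efact : Real.exp (Real.log (Nat.factorial C)) = (Nat.factorial C : ℝ) :=
      Real.exp_log (by exact_mod_cast Nat.factorial_pos C)
    have hfactne : ((Nat.factorial C : ℝ)) ≠ 0 := by
      exact_mod_cast (Nat.factorial_pos C).ne'
    have hpois_eq : poisP lp C * poisP ls 1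
        = Real.exp (-(lp + ls) + x * (γp * Real.log x) + γs * Real.log x
            - Real.log (Nat.factorial C)) := by
      rw [Real.exp_sub, neg_add, Real.exp_add, Real.exp_add, e3, els, efact]
      unfold poisP
      simp only [Nat.factorial_one, pow_one, Nat.cast_one]
      field_simp
      rw [Real.exp_add]
    have hloglb : -(lp + ls) + x * (γp * Real.log x) + γs * Real.log x
        - Real.log (Nat.factorial C) ≤ Real.log (secOutage lp ls x) :=
      (Real.le_log_iff_exp_le spos).mpr (by rw [← hpois_eq]; exact hgepois)
    have hfact_le : Real.log (Nat.factorial C) ≤ x * Real.log x := by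
      have hcast : ((Nat.factorial C : ℝ)) ≤ ((C : ℝ)) ^ (C : ℕ) := by
        exact_mod_cast Nat.factorial_le_pow C
      calc Real.log (Nat.factorial C) ≤ Real.log (((C : ℝ)) ^ (C : ℕ)) :=
        Real.log_le_log (by exact_mod_cast Nat.factorial_pos C) hcast
      _ = (C : ℝ) * Real.log C := Real.log_pow _ _
      _ = x * Real.log x := by rw [hx]
    have hγslog : 0 ≤ γs * Real.log x := mul_nonneg h0.le hlogpos.le
    have hrw : x * (γp * Real.log x) = γp * (x * Real.log x) := by ring
    rw [div_le_iff₀ hD]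
    have expand : ((1 - γp) + (lp + ls) / (x * Real.log x)) * (x * Real.log x)
        = (x * Real.log x) - γp * (x * Real.log x) + (lp + ls) := by
      field_simp
    linarith
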